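/- Fix integers n ≥ 2 and d ≥ 1. The product Beta measures on [0,1]^d with common parameter sum n are linearly independent: if for each tuple I = (i_1,…,i_d) ∈ {1,…,n−1}^d we write μ_I = β_{i_1,n−i_1} ⊗ ⋯ ⊗ β_{i_d,n−i_d} (the product measure on [0,1]^d), and real numbers (a_I) satisfy Σ_I a_I·∫ f dμ_I = 0 for every continuous f : [0,1]^d → ℝ, then a_I = 0 for every I. -/

import Mathlib

open MeasureTheory intervalIntegral Polynomial
open scoped ENNReal NNReal

/-- The normalizing constant `B(i,j) = (i-1)!(j-1)!/(i+j-1)!` of the Beta distribution. -/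
noncomputable def betaB (i j : ℕ) : ℝ :=
  (((i - 1).factorial : ℝ) * ((j - 1).factorial : ℝ)) / ((i + j - 1).factorial : ℝ)

/-- The Beta(i,j) probability measure on `[0,1] ⊆ ℝ`, given by the density
`p ↦ p^(i-1) (1-p)^(j-1) / B(i,j)` with respect to Lebesgue measure on `[0,1]`. -/
noncomputable def betaMeasure (i j : ℕ) : Measure ℝ :=
  (volume.restrict (Set.Icc (0:ℝ) 1)).withDensity
    (fun p => ENNReal.ofReal (p ^ (i - 1) * (1 - p) ^ (j - 1) / betaB i j))

lemma betaInt : ∀ (b a : ℕ), ∫ x in (0:ℝ)..1, x^a * (1-x)^b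
    = (a.factorial * b.factorial : ℝ) / (a+b+1).factorial
  | 0, a => by
    have : ((a:ℝ)+1) ≠ 0 := by positivity
    have h2 : (a.factorial : ℝ) ≠ 0 := by positivity
    simp only [pow_zero, mul_one, integral_pow, one_pow, Nat.add_zero, Nat.factorial_one,
      Nat.factorial_succ]
    push_cast
    rw [zero_pow (by omega), sub_zero]
    field_simp
    simp
  | (b+1), a => by
    have hu : ∀ x ∈ Set.uIcc (0:ℝ) 1, HasDerivAt (fun y : ℝ => (1-y)^(b+1))
        (-( (b+1) * (1-x)^b)) x := by
      intro x _
      have : HasDerivAt (fun y : ℝ => (1-y)) (-1) x := by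
        simpa using ((hasDerivAt_id x).const_sub 1)
      simpa [mul_comm, mul_assoc, mul_left_comm, Pi.pow_def] using (this.pow (b+1))
    have hv : ∀ x ∈ Set.uIcc (0:ℝ) 1, HasDerivAt (fun y : ℝ => y^(a+1)/(a+1))
        (x^a) x := by
      intro x _
      have h := (hasDerivAt_pow (a+1) x).div_const ((a:ℝ)+1)
      have e : (↑(a + 1) * x ^ (a + 1 - 1)) / ((a:ℝ)+1) = x ^ a := by
        push_cast; field_simp
      rw [e] at h
      convert h using 2
    have key := intervalIntegral.integral_mul_deriv_eq_deriv_mul hu hv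
      (by apply Continuous.intervalIntegrable; continuity)
      (by apply Continuous.intervalIntegrable; continuity)
    have comm : (∫ x in (0:ℝ)..1, x^a * (1-x)^(b+1))
        = ∫ x in (0:ℝ)..1, (1-x)^(b+1) * x^a := by
      congr 1; ext x; ring
    rw [comm, key]
    have : (∫ x in (0:ℝ)..1, -((b:ℝ)+1) * (1-x)^b * (x^(a+1)/(a+1)))
        = (-((b:ℝ)+1)/(a+1)) * ∫ x in (0:ℝ)..1, x^(a+1) * (1-x)^b := by
      rw [← intervalIntegral.integral_const_mul]
      congr 1; ext x; ring
    have e2 : (fun x : ℝ => -(((b:ℝ)+1) * (1-x)^b) * (x^(a+1)/(a+1)))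
        = fun x : ℝ => -((b:ℝ)+1) * (1-x)^b * (x^(a+1)/(a+1)) := by
      ext x; ring
    rw [e2, this, betaInt b (a+1)]
    have h1 : ((a:ℝ)+1) ≠ 0 := by positivity
    have h3 : ((a+b+2).factorial : ℝ) ≠ 0 := by positivity
    simp only [sub_self, zero_pow (Nat.succ_ne_zero b), one_pow, zero_div, mul_zero, zero_mul,
      zero_sub, sub_zero, zero_pow (by omega : a + 1 ≠ 0), Nat.factorial_succ]
    push_cast [Nat.factorial_succ]
    field_simp
    ring

lemma betaB_pos (i j : ℕ) : 0 < betaB i j := by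
  unfold betaB; positivity

lemma betaDensity_cont (i j : ℕ) :
    Continuous (fun p : ℝ => p ^ (i - 1) * (1 - p) ^ (j - 1) / betaB i j) := by
  continuity

lemma integral_betaMeasure (i j : ℕ) (g : ℝ → ℝ) :
    ∫ x, g x ∂(betaMeasure i j)
      = (betaB i j)⁻¹ * ∫ x in (0:ℝ)..1, g x * (x ^ (i-1) * (1-x) ^ (j-1)) := by
  set r : ℝ → ℝ := fun p => p ^ (i - 1) * (1 - p) ^ (j - 1) / betaB i j with hr
  have hrc : Continuous r := betaDensity_cont i j
  have hmeas : Measurable (fun x => (r x).toNNReal) :=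
    (hrc.measurable).real_toNNReal
  have : betaMeasure i j
      = (volume.restrict (Set.Icc (0:ℝ) 1)).withDensity (fun p => ((r p).toNNReal : ℝ≥0∞)) := by
    unfold betaMeasure
    simp_rw [ENNReal.ofReal]
    rfl
  rw [this, integral_withDensity_eq_integral_smul hmeas]
  have hcongr : ∫ x in Set.Icc (0:ℝ) 1, (r x).toNNReal • g x
      = ∫ x in Set.Icc (0:ℝ) 1, (betaB i j)⁻¹ * (g x * (x ^ (i-1) * (1-x) ^ (j-1))) := by
    apply setIntegral_congr_fun measurableSet_Icc
    intro x hx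
    obtain ⟨hx0, hx1⟩ := hx
    have hrpos : 0 ≤ r x :=
      div_nonneg (mul_nonneg (pow_nonneg hx0 _) (pow_nonneg (by linarith) _)) (betaB_pos i j).le
    simp only [NNReal.smul_def, smul_eq_mul]; rw [Real.coe_toNNReal _ hrpos]; simp only [hr]
    field_simp
  rw [hcongr, MeasureTheory.integral_const_mul, integral_Icc_eq_integral_Ioc,
    ← intervalIntegral.integral_of_le zero_le_one]

lemma betaMeasure_univ (i j : ℕ) (hi : 1 ≤ i) (hj : 1 ≤ j) :
    betaMeasure i j Set.univ = 1 := by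
  obtain ⟨i', rfl⟩ : ∃ i', i = i' + 1 := ⟨i - 1, by omega⟩
  obtain ⟨j', rfl⟩ : ∃ j', j = j' + 1 := ⟨j - 1, by omega⟩
  set r : ℝ → ℝ := fun p => p ^ i' * (1 - p) ^ j' / betaB (i'+1) (j'+1) with hr
  have hB := betaB_pos (i'+1) (j'+1)
  have h1 : betaMeasure (i'+1) (j'+1) Set.univ
      = ∫⁻ x, ENNReal.ofReal (r x) ∂(volume.restrict (Set.Icc (0:ℝ) 1)) := by
    unfold betaMeasure
    rw [withDensity_apply _ MeasurableSet.univ, Measure.restrict_univ]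
    simp [hr]
  have hint : IntegrableOn r (Set.Icc (0:ℝ) 1) volume :=
    (betaDensity_cont (i'+1) (j'+1)).integrableOn_Icc
  have hnn : 0 ≤ᵐ[volume.restrict (Set.Icc (0:ℝ) 1)] r := by
    refine (ae_restrict_iff' measurableSet_Icc).2 (Filter.Eventually.of_forall ?_)
    intro x hx
    exact div_nonneg (mul_nonneg (pow_nonneg hx.1 _) (pow_nonneg (by linarith [hx.2]) _)) hB.le
  rw [h1, ← ofReal_integral_eq_lintegral_ofReal hint hnn]
  have : ∫ x in Set.Icc (0:ℝ) 1, r x = 1 := by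
    rw [integral_Icc_eq_integral_Ioc, ← intervalIntegral.integral_of_le zero_le_one]
    have : ∫ x in (0:ℝ)..1, r x
        = (betaB (i'+1) (j'+1))⁻¹ * ∫ x in (0:ℝ)..1, x ^ i' * (1-x) ^ j' := by
      rw [← intervalIntegral.integral_const_mul]
      congr 1; ext x; rw [hr]; ring
    rw [this, betaInt]
    unfold betaB
    have h2 : ((i' + j' + 1).factorial : ℝ) ≠ 0 := by positivity
    have h3 : (i'.factorial : ℝ) ≠ 0 := by positivity
    have h4 : (j'.factorial : ℝ) ≠ 0 := by positivity
    simp only [Nat.add_sub_cancel]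
    rw [show i' + 1 + (j'+1) - 1 = i' + j' + 1 from by omega]
    field_simp
  rw [this, ENNReal.ofReal_one]

lemma integral_pow_betaMeasure (i j k : ℕ) (hi : 1 ≤ i) (hj : 1 ≤ j) :
    ∫ x, x^k ∂(betaMeasure i j)
      = (i.ascFactorial k : ℝ) * ((i+j-1).factorial / (i+j-1+k).factorial) := by
  obtain ⟨i', rfl⟩ : ∃ i', i = i' + 1 := ⟨i - 1, by omega⟩
  obtain ⟨j', rfl⟩ : ∃ j', j = j' + 1 := ⟨j - 1, by omega⟩
  rw [integral_betaMeasure]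
  have e1 : ∫ x in (0:ℝ)..1, x ^ k * (x ^ (i' + 1 - 1) * (1-x) ^ (j' + 1 - 1))
      = ∫ x in (0:ℝ)..1, x ^ (k + i') * (1-x) ^ j' := by
    congr 1; ext x; simp only [Nat.add_sub_cancel]; rw [pow_add]; ring
  rw [e1, betaInt]
  unfold betaB
  have hasc := Nat.factorial_mul_ascFactorial i' k
  have h2 : ((i' + j' + 1).factorial : ℝ) ≠ 0 := by positivity
  have h3 : (i'.factorial : ℝ) ≠ 0 := by positivity
  have h4 : (j'.factorial : ℝ) ≠ 0 := by positivity
  have h5 : ((k + i' + j' + 1).factorial : ℝ) ≠ 0 := by positivity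
  simp only [Nat.add_sub_cancel]
  rw [show i' + 1 + (j'+1) - 1 = i' + j' + 1 from by omega,
    show k + i' + j' + 1 = i' + j' + 1 + k from by omega] at *
  have hascR : (i'.factorial : ℝ) * ((i'+1).ascFactorial k : ℝ) = ((i' + k).factorial : ℝ) := by
    exact_mod_cast congrArg Nat.cast hasc
  rw [show k + i' = i' + k from by omega, ← hascR]
  field_simp

lemma integrable_pow_betaMeasure (i j k : ℕ) :
    Integrable (fun x : ℝ => x ^ k) (betaMeasure i j) := by
  unfold betaMeasure
  rw [integrable_withDensity_iff (by fun_prop) (Filter.Eventually.of_forall fun x =>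
    ENNReal.ofReal_lt_top)]
  have hc : Continuous (fun x : ℝ =>
      x ^ k * (ENNReal.ofReal (x ^ (i-1) * (1-x) ^ (j-1) / betaB i j)).toReal) := by
    have hpt : ∀ x : ℝ, (ENNReal.ofReal (x ^ (i-1) * (1-x) ^ (j-1) / betaB i j)).toReal
        = (x ^ (i-1) * (1-x) ^ (j-1) / betaB i j) ⊔ 0 := fun x => by
      simp [ENNReal.ofReal, Real.coe_toNNReal']
    simp only [hpt]
    exact (continuous_pow k).mul ((betaDensity_cont i j).max continuous_const)
  exact hc.integrableOn_Icc

lemma ascPoch_li : ∀ (m : ℕ) (α : ℕ → ℝ),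
    (∑ k ∈ Finset.range m, α k • ascPochhammer ℝ k) = 0 → ∀ k < m, α k = 0
  | 0, α, _, k, hk => absurd hk (by omega)
  | (m+1), α, hsum, k, hk => by
    have htop : α m = 0 := by
      have hmon : (ascPochhammer ℝ m).coeff m = 1 := by
        have hmo := (monic_ascPochhammer ℝ m)
        have hd := ascPochhammer_natDegree m (S := ℝ)
        rw [Monic.def, leadingCoeff, hd] at hmo
        exact hmo
      have hc := congrArg (fun p : Polynomial ℝ => p.coeff m) hsum
      simp only [Finset.sum_range_succ, coeff_add, finset_sum_coeff, coeff_zero,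
        coeff_smul] at hc
      have hz : ∀ j ∈ Finset.range m, α j • (ascPochhammer ℝ j).coeff m = 0 := by
        intro j hj
        rw [coeff_eq_zero_of_natDegree_lt
          (by rw [ascPochhammer_natDegree]; exact Finset.mem_range.1 hj), smul_zero]
      rw [Finset.sum_eq_zero hz, hmon] at hc
      simpa using hc
    rcases Nat.lt_succ_iff_lt_or_eq.1 hk with h | rfl
    · apply ascPoch_li m α _ k h
      have h2 := hsum
      rw [Finset.sum_range_succ, htop, zero_smul, add_zero] at h2
      exact h2
    · exact htop

noncomputable def momM (m : ℕ) : Matrix (Fin m) (Fin m) ℝ :=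
  Matrix.of fun i k : Fin m =>
    (((i:ℕ)+1).ascFactorial k : ℝ) * ((m.factorial : ℝ) / ((m + (k:ℕ)).factorial : ℝ))

lemma momM_isUnit (m : ℕ) (hm : 1 ≤ m) : IsUnit (momM m) := by
  rw [← Matrix.mulVec_injective_iff_isUnit]
  rw [show (momM m).mulVec = ⇑(momM m).mulVecLin from rfl, ← LinearMap.ker_eq_bot,
    LinearMap.ker_eq_bot']
  intro v hv
  rw [Matrix.mulVecLin_apply] at hv
  set α : ℕ → ℝ := fun k =>
    if h : k < m then ((m.factorial : ℝ) / ((m + k).factorial : ℝ)) * v ⟨k, h⟩ else 0 with hα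
  set Q : Polynomial ℝ := ∑ k ∈ Finset.range m, α k • ascPochhammer ℝ k with hQ
  have key : ∀ i : Fin m,
      ∑ k ∈ Finset.range m, α k * ((((i:ℕ)+1).ascFactorial k : ℕ) : ℝ) = 0 := by
    intro i
    have hvi := congrFun hv i
    simp only [Matrix.mulVec, dotProduct, momM, Matrix.of_apply, Pi.zero_apply] at hvi
    rw [← Fin.sum_univ_eq_sum_range (fun k => α k * ((((i:ℕ)+1).ascFactorial k : ℕ) : ℝ)) m]
    rw [← hvi]
    apply Finset.sum_congr rfl
    intro k _
    simp only [hα, Fin.is_lt, dif_pos, Fin.eta]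
    ring
  have heval : ∀ i : Fin m, Q.eval ((i:ℝ) + 1) = 0 := by
    intro i
    rw [hQ, Polynomial.eval_finset_sum, ← key i]
    apply Finset.sum_congr rfl
    intro k _
    rw [Polynomial.eval_smul, smul_eq_mul]
    congr 1
    have hcast : ((i:ℝ) + 1) = ((((i:ℕ)+1) : ℕ) : ℝ) := by push_cast; ring
    rw [hcast, ← ascPochhammer_eval_cast, ascPochhammer_nat_eq_ascFactorial]
  have hQ0 : Q = 0 := by
    apply Polynomial.eq_zero_of_natDegree_lt_card_of_eval_eq_zero Q
      (f := fun i : Fin m => (i:ℝ) + 1) (fun i j hij => by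
        have h1 : ((i:ℕ):ℝ) = ((j:ℕ):ℝ) := by dsimp at hij; linarith
        exact Fin.ext (by exact_mod_cast h1)) heval ?_
    rw [Fintype.card_fin]
    calc Q.natDegree ≤ m - 1 := Polynomial.natDegree_sum_le_of_forall_le _ _ (fun k hk =>
        le_trans (Polynomial.natDegree_smul_le _ _)
          (by rw [ascPochhammer_natDegree]; exact Nat.le_sub_one_of_lt (Finset.mem_range.1 hk)))
      _ < m := by omega
  have hαz := ascPoch_li m α (hQ ▸ hQ0)
  funext k
  have := hαz k k.is_lt
  simp only [hα, Fin.is_lt, dif_pos, Fin.eta] at this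
  have hfac : ((m.factorial : ℝ) / ((m + (k:ℕ)).factorial : ℝ)) ≠ 0 := by positivity
  have := mul_eq_zero.1 this
  tauto

/-- Products of Beta measures with common parameter sum `n` are linearly independent. -/
theorem betaMeasure_pi_linearIndependent (n d : ℕ) (hn : 2 ≤ n) (hd : 1 ≤ d)
    (a : (Fin d → ℕ) → ℝ)
    (h : ∀ f : (Fin d → ℝ) → ℝ, ContinuousOn f (Set.Icc 0 1) →
      ∑ I ∈ Fintype.piFinset (fun _ : Fin d => Finset.Icc 1 (n - 1)),
        a I * ∫ p, f p ∂(Measure.pi (fun t => betaMeasure (I t) (n - I t))) = 0) :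
    ∀ I ∈ Fintype.piFinset (fun _ : Fin d => Finset.Icc 1 (n - 1)), a I = 0 := by
  intro J hJ
  have hJm := hJ
  simp only [Fintype.mem_piFinset, Finset.mem_Icc] at hJm
  set m := n - 1 with hmdef
  have hm : 1 ≤ m := by omega
  have hMunit := momM_isUnit m hm
  have hdet : IsUnit (momM m).det := (Matrix.isUnit_iff_isUnit_det _).1 hMunit
  set W := (momM m)⁻¹ with hWdef
  have hMW : momM m * W = 1 := Matrix.mul_nonsing_inv _ hdet
  set q : Fin m → ℝ → ℝ := fun jj x => ∑ k : Fin m, W k jj * x ^ (k:ℕ) with hq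
  have hqc : ∀ jj, Continuous (q jj) := fun jj =>
    continuous_finset_sum _ fun k _ => continuous_const.mul (continuous_pow _)
  -- value of the dual test functions against each beta measure
  have hint : ∀ (i0 : ℕ) (h1 : 1 ≤ i0) (h2 : i0 ≤ m) (jj : Fin m),
      ∫ x, q jj x ∂(betaMeasure i0 (n - i0))
        = (1 : Matrix (Fin m) (Fin m) ℝ) ⟨i0 - 1, by omega⟩ jj := by
    intro i0 h1 h2 jj
    show ∫ x, ∑ k : Fin m, W k jj * x ^ (k:ℕ) ∂(betaMeasure i0 (n - i0)) = _
    rw [integral_finset_sum (μ := betaMeasure i0 (n - i0)) Finset.univ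
      (f := fun (k : Fin m) (x : ℝ) => W k jj * x ^ (k:ℕ))
      (fun k _ => (integrable_pow_betaMeasure i0 (n - i0) (k:ℕ)).const_mul _)]
    have hterm : ∀ k : Fin m, ∫ x, W k jj * x ^ (k:ℕ) ∂(betaMeasure i0 (n - i0))
        = (momM m) ⟨i0 - 1, by omega⟩ k * W k jj := by
      intro k
      rw [MeasureTheory.integral_const_mul, integral_pow_betaMeasure i0 (n - i0) (k:ℕ) h1 (by omega)]
      rw [show i0 + (n - i0) - 1 = m from by omega]
      simp only [momM, Matrix.of_apply]
      rw [show ((⟨i0 - 1, by omega⟩ : Fin m) : ℕ) + 1 = i0 from by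
        show i0 - 1 + 1 = i0; omega]
      ring
    rw [Finset.sum_congr rfl fun k _ => hterm k, ← Matrix.mul_apply, hMW]
  -- the test function on the cube
  set Jf : Fin d → Fin m := fun t => ⟨J t - 1, by have := hJm t; omega⟩ with hJf
  set F : (Fin d → ℝ) → ℝ := fun p => ∏ t, q (Jf t) (p t) with hF
  have hFc : Continuous F := continuous_finset_prod _ fun t _ =>
    (hqc _).comp (continuous_apply t)
  have hsum := h F hFc.continuousOn
  -- Fubini
  have fubini : ∀ I : Fin d → ℕ, (∀ t, 1 ≤ I t ∧ I t ≤ m) →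
      ∫ p, F p ∂(Measure.pi fun t => betaMeasure (I t) (n - I t))
        = ∏ t, ∫ x, q (Jf t) x ∂(betaMeasure (I t) (n - I t)) := by
    intro I hI
    have sf : ∀ t : Fin d, SigmaFinite (betaMeasure (I t) (n - I t)) := fun t => by
      haveI : IsProbabilityMeasure (betaMeasure (I t) (n - I t)) :=
        ⟨betaMeasure_univ _ _ (hI t).1 (by have := hI t; omega)⟩
      infer_instance
    have key := @MeasureTheory.integral_fintype_prod_eq_prod ℝ (Fin d) _ _ (fun _ => ℝ)
      (fun t => q (Jf t)) _ (fun t => betaMeasure (I t) (n - I t)) (fun t => sf t)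
    exact key
  -- compute each term of the sum
  have heach : ∀ I ∈ Fintype.piFinset (fun _ : Fin d => Finset.Icc 1 (n - 1)),
      a I * ∫ p, F p ∂(Measure.pi fun t => betaMeasure (I t) (n - I t))
        = a I * (if I = J then 1 else 0) := by
    intro I hI
    have hIm : ∀ t, 1 ≤ I t ∧ I t ≤ m := by
      intro t
      have := Fintype.mem_piFinset.1 hI t
      simpa [Finset.mem_Icc] using this
    rw [fubini I hIm]
    congr 1
    have hval : ∀ t, ∫ x, q (Jf t) x ∂(betaMeasure (I t) (n - I t))
        = (1 : Matrix (Fin m) (Fin m) ℝ) ⟨I t - 1, by have := hIm t; omega⟩ (Jf t) :=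
      fun t => hint (I t) (hIm t).1 (hIm t).2 (Jf t)
    by_cases hIJ : I = J
    · subst hIJ
      rw [if_pos rfl]
      rw [Finset.prod_congr rfl fun t _ => hval t]
      apply Finset.prod_eq_one
      intro t _
      exact Matrix.one_apply_eq _
    · rw [if_neg hIJ]
      obtain ⟨t0, ht0⟩ := Function.ne_iff.1 hIJ
      apply Finset.prod_eq_zero (Finset.mem_univ t0)
      rw [hval t0, Matrix.one_apply_ne]
      intro hcontra
      apply ht0
      have h1 := (hIm t0).1
      have h2 := (hJm t0).1
      have := congrArg Fin.val hcontra
      simp only [hJf] at this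
      omega
  rw [Finset.sum_congr rfl heach] at hsum
  simp only [mul_ite, mul_one, mul_zero] at hsum
  rwa [Finset.sum_ite_eq' _ J a, if_pos hJ] at hsum
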